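/- Let X be a metric measure space with a doubling measure, 0 < γ ≤ 1/2, and 0 < p < ∞. There exists a constant C > 0 (depending on γ, p, and the doubling constant) such that ‖M_γ u‖_{L^p(X)} ≤ C ‖u‖_{L^p(X)} for every u ∈ L^p(X). -/

import Mathlib

open MeasureTheory Metric Set

/-- The γ-median of `u` over `A`. -/
noncomputable def median {X : Type*} [MeasurableSpace X] (μ : Measure X) (γ : ℝ) (A : Set X)
    (u : X → ℝ) : ℝ :=
  sInf {a : ℝ | μ {x ∈ A | a < u x} < ENNReal.ofReal γ * μ A}

/-- The γ-median maximal function, as an extended-real valued function. -/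
noncomputable def medianMaximal {X : Type*} [MetricSpace X] [MeasurableSpace X]
    (μ : Measure X) (γ : ℝ) (u : X → ℝ) (x : X) : ENNReal :=
  ⨆ (r : ℝ) (_ : 0 < r), ENNReal.ofReal (median μ γ (ball x r) (fun y => |u y|))

/-- If the median is greater than `a`, then the superlevel set at `a` occupies
a `γ`-fraction of `A`. -/
lemma median_gt_bound {X : Type*} [MeasurableSpace X] (μ : Measure X) (A : Set X)
    (γ : ℝ) (hγ1 : γ ≤ 1) (v : X → ℝ) (hv : ∀ y, 0 ≤ v y)
    (a : ℝ) (hlt : a < median μ γ A v) :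
    ENNReal.ofReal γ * μ A ≤ μ {x ∈ A | a < v x} := by
  unfold median at hlt
  by_contra h
  push_neg at h
  have haS : a ∈ {b : ℝ | μ {x ∈ A | b < v x} < ENNReal.ofReal γ * μ A} := h
  have hbdd : ∀ b ∈ {b : ℝ | μ {x ∈ A | b < v x} < ENNReal.ofReal γ * μ A}, (0:ℝ) ≤ b := by
    intro b hb
    by_contra hb0
    push_neg at hb0
    have heq : {x ∈ A | b < v x} = A := by
      ext y; exact ⟨fun hy => hy.1, fun hy => ⟨hy, lt_of_lt_of_le hb0 (hv y)⟩⟩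
    simp only [Set.mem_setOf_eq] at hb
    rw [heq] at hb
    have : ENNReal.ofReal γ * μ A ≤ μ A := by
      calc ENNReal.ofReal γ * μ A ≤ 1 * μ A :=
            mul_le_mul_left (ENNReal.ofReal_le_one.2 hγ1) _
        _ = μ A := one_mul _
    exact absurd (lt_of_lt_of_le hb this) (lt_irrefl _)
  exact absurd (csInf_le ⟨0, hbdd⟩ haS) (not_le.2 hlt)

/-- Weak-type bound for the "fraction maximal operator" via the Vitali covering lemma. -/
lemma weak_covering_bound {X : Type*} [MetricSpace X] [MeasurableSpace X] [BorelSpace X]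
    (μ : Measure X)
    (hpos : ∀ (x : X) (r : ℝ), 0 < r → 0 < μ (ball x r))
    (c : ℝ) (hc : 0 < c)
    (hdoubling : ∀ (x : X) (r : ℝ), 0 < r → μ (ball x (2 * r)) ≤ ENNReal.ofReal c * μ (ball x r))
    (γ : ℝ) (hγ0 : 0 < γ) (E : Set X) (hE : MeasurableSet E) :
    μ {x | ∃ r, 0 < r ∧ ENNReal.ofReal γ * μ (ball x r) ≤ μ (ball x r ∩ E)} ≤
      ENNReal.ofReal c ^ 3 * (ENNReal.ofReal γ)⁻¹ * μ E := by
  classical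
  set K : ENNReal := ENNReal.ofReal c ^ 3 * (ENNReal.ofReal γ)⁻¹ with hK
  have hγne : ENNReal.ofReal γ ≠ 0 := by
    simp [ENNReal.ofReal_eq_zero, not_le, hγ0]
  have hK0 : K ≠ 0 := by
    apply mul_ne_zero
    · exact pow_ne_zero _ (by simp [ENNReal.ofReal_eq_zero, not_le, hc])
    · exact ENNReal.inv_ne_zero.2 ENNReal.ofReal_ne_top
  rcases eq_or_ne (μ E) ⊤ with hEtop | hEfin
  · rw [hEtop, ENNReal.mul_top hK0]; exact le_top
  set Gn : ℕ → Set X := fun n =>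
    {x | ∃ r, 0 < r ∧ r ≤ (n : ℝ) ∧ ENNReal.ofReal γ * μ (ball x r) ≤ μ (ball x r ∩ E)} with hGn
  have hGsub : {x | ∃ r, 0 < r ∧ ENNReal.ofReal γ * μ (ball x r) ≤ μ (ball x r ∩ E)} ⊆
      ⋃ n, Gn n := by
    rintro x ⟨r, hr, hx⟩
    exact Set.mem_iUnion.2 ⟨⌈r⌉₊, r, hr, Nat.le_ceil r, hx⟩
  have hmono : Monotone Gn := by
    intro n m hnm x hx
    obtain ⟨r, hr, hrn, hx⟩ := hx
    exact ⟨r, hr, hrn.trans (by exact_mod_cast hnm), hx⟩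
  have key : ∀ n, μ (Gn n) ≤ K * μ E := by
    intro n
    have hsel : ∀ a ∈ Gn n, ∃ r, 0 < r ∧ r ≤ (n : ℝ) ∧
        ENNReal.ofReal γ * μ (ball a r) ≤ μ (ball a r ∩ E) := fun a ha => ha
    choose! rad hrad1 hrad2 hrad3 using hsel
    obtain ⟨u, huG, hdisj, hcov⟩ :=
      Vitali.exists_disjoint_subfamily_covering_enlargement_closedBall (Gn n) id rad (n : ℝ)
        (fun a ha => hrad2 a ha) 4 (by norm_num)
    simp only [id_eq] at hdisj hcov
    have hposmem : ∀ b ∈ u, 0 < μ (closedBall b (rad b) ∩ E) := by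
      intro b hb
      have hbG := huG hb
      calc (0:ENNReal) < ENNReal.ofReal γ * μ (ball b (rad b)) :=
            ENNReal.mul_pos hγne (hpos b (rad b) (hrad1 b hbG)).ne'
        _ ≤ μ (ball b (rad b) ∩ E) := hrad3 b hbG
        _ ≤ μ (closedBall b (rad b) ∩ E) :=
            measure_mono (inter_subset_inter_left _ ball_subset_closedBall)
    have hcnt : u.Countable := by
      have hdisj' : Pairwise (Function.onFun Disjoint fun b : ↥u => closedBall (b : X) (rad b) ∩ E) := by
        intro i j hij
        have := hdisj i.2 j.2 (fun h => hij (Subtype.coe_injective h))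
        exact this.mono inter_subset_left inter_subset_left
      have hmble : ∀ b : ↥u, MeasurableSet (closedBall (b : X) (rad b) ∩ E) :=
        fun b => measurableSet_closedBall.inter hE
      have hfin' : μ (⋃ b : ↥u, closedBall (b : X) (rad b) ∩ E) ≠ ⊤ := by
        refine ne_top_of_le_ne_top hEfin (measure_mono ?_)
        exact Set.iUnion_subset fun b => inter_subset_right
      have hcount := Measure.countable_meas_pos_of_disjoint_of_meas_iUnion_ne_top μ hmble hdisj' hfin'
      have huniv : {i : ↥u | 0 < μ (closedBall (i : X) (rad i) ∩ E)} = Set.univ := by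
        ext i; simp [hposmem i i.2]
      rw [huniv, Set.countable_univ_iff] at hcount
      exact Set.countable_coe_iff.mp hcount
    have hGcov : Gn n ⊆ ⋃ b ∈ u, ball b (8 * rad b) := by
      intro a ha
      obtain ⟨b, hbu, hsubc⟩ := hcov a ha
      have hb_rad : 0 < rad b := hrad1 b (huG hbu)
      have ha_in : a ∈ closedBall a (rad a) := mem_closedBall_self (hrad1 a ha).le
      have hmem : a ∈ closedBall b (4 * rad b) := hsubc ha_in
      exact Set.mem_biUnion hbu (closedBall_subset_ball (by linarith) hmem)
    have hball : ∀ b ∈ u, μ (ball b (8 * rad b)) ≤ K * μ (closedBall b (rad b) ∩ E) := by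
      intro b hb
      have hbG := huG hb
      have hr : 0 < rad b := hrad1 b hbG
      have h1 : μ (ball b (8 * rad b)) ≤ ENNReal.ofReal c * μ (ball b (4 * rad b)) := by
        have := hdoubling b (4 * rad b) (by linarith)
        rwa [show 2 * (4 * rad b) = 8 * rad b by ring] at this
      have h2 : μ (ball b (4 * rad b)) ≤ ENNReal.ofReal c * μ (ball b (2 * rad b)) := by
        have := hdoubling b (2 * rad b) (by linarith)
        rwa [show 2 * (2 * rad b) = 4 * rad b by ring] at this
      have h3 : μ (ball b (2 * rad b)) ≤ ENNReal.ofReal c * μ (ball b (rad b)) :=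
        hdoubling b (rad b) hr
      have h4 : μ (ball b (rad b)) ≤ (ENNReal.ofReal γ)⁻¹ * μ (ball b (rad b) ∩ E) := by
        have hh := hrad3 b hbG
        calc μ (ball b (rad b))
            = (ENNReal.ofReal γ)⁻¹ * (ENNReal.ofReal γ * μ (ball b (rad b))) := by
              rw [← mul_assoc, ENNReal.inv_mul_cancel hγne ENNReal.ofReal_ne_top, one_mul]
          _ ≤ (ENNReal.ofReal γ)⁻¹ * μ (ball b (rad b) ∩ E) := mul_le_mul_right hh _
      calc μ (ball b (8 * rad b))
          ≤ ENNReal.ofReal c * μ (ball b (4 * rad b)) := h1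
        _ ≤ ENNReal.ofReal c * (ENNReal.ofReal c * μ (ball b (2 * rad b))) :=
            mul_le_mul_right h2 _
        _ ≤ ENNReal.ofReal c * (ENNReal.ofReal c * (ENNReal.ofReal c * μ (ball b (rad b)))) :=
            mul_le_mul_right (mul_le_mul_right h3 _) _
        _ = ENNReal.ofReal c ^ 3 * μ (ball b (rad b)) := by ring
        _ ≤ ENNReal.ofReal c ^ 3 * ((ENNReal.ofReal γ)⁻¹ * μ (ball b (rad b) ∩ E)) :=
            mul_le_mul_right h4 _
        _ = K * μ (ball b (rad b) ∩ E) := by rw [hK, mul_assoc]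
        _ ≤ K * μ (closedBall b (rad b) ∩ E) :=
            mul_le_mul_right (measure_mono (inter_subset_inter_left _ ball_subset_closedBall)) _
    calc μ (Gn n) ≤ μ (⋃ b ∈ u, ball b (8 * rad b)) := measure_mono hGcov
      _ ≤ ∑' b : ↥u, μ (ball b (8 * rad b)) := measure_biUnion_le μ hcnt _
      _ ≤ ∑' b : ↥u, K * μ (closedBall (b : X) (rad b) ∩ E) :=
          ENNReal.tsum_le_tsum fun b => hball b b.2
      _ = K * ∑' b : ↥u, μ (closedBall (b : X) (rad b) ∩ E) := ENNReal.tsum_mul_left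
      _ = K * μ (⋃ b ∈ u, closedBall b (rad b) ∩ E) := by
          congr 1
          exact (measure_biUnion hcnt
            (hdisj.mono fun b => inter_subset_left)
            (fun b _ => measurableSet_closedBall.inter hE)).symm
      _ ≤ K * μ E := mul_le_mul_right
          (measure_mono (Set.iUnion₂_subset fun b _ => inter_subset_right)) _
  calc μ {x | ∃ r, 0 < r ∧ ENNReal.ofReal γ * μ (ball x r) ≤ μ (ball x r ∩ E)}
      ≤ μ (⋃ n, Gn n) := measure_mono hGsub
    _ = ⨆ n, μ (Gn n) := hmono.measure_iUnion
    _ ≤ K * μ E := iSup_le key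

theorem median_maximal_Lp_bound {X : Type*} [MetricSpace X] [MeasurableSpace X] [BorelSpace X]
    (μ : Measure X)
    (hpos : ∀ (x : X) (r : ℝ), 0 < r → 0 < μ (ball x r))
    (hfin : ∀ (x : X) (r : ℝ), 0 < r → μ (ball x r) < ⊤)
    (c : ℝ) (hc : 0 < c)
    (hdoubling : ∀ (x : X) (r : ℝ), 0 < r → μ (ball x (2 * r)) ≤ ENNReal.ofReal c * μ (ball x r))
    (γ : ℝ) (hγ0 : 0 < γ) (hγ : γ ≤ 1 / 2)
    (p : ℝ) (hp : 0 < p) :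
    ∃ C : ℝ, 0 < C ∧ ∀ u : X → ℝ, Measurable u →
      ∫⁻ x, ENNReal.ofReal (|u x| ^ p) ∂μ < ⊤ →
      (∫⁻ x, medianMaximal μ γ u x ^ p ∂μ) ^ (1 / p) ≤
        ENNReal.ofReal C * (∫⁻ x, ENNReal.ofReal (|u x| ^ p) ∂μ) ^ (1 / p) := by
  classical
  set K : ENNReal := ENNReal.ofReal c ^ 3 * (ENNReal.ofReal γ)⁻¹ with hKdef
  have hγne : ENNReal.ofReal γ ≠ 0 := by
    simp [ENNReal.ofReal_eq_zero, not_le, hγ0]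
  have hKtop : K ≠ ⊤ :=
    ENNReal.mul_ne_top (ENNReal.pow_ne_top ENNReal.ofReal_ne_top) (ENNReal.inv_ne_top.2 hγne)
  refine ⟨max 1 ((K ^ (1/p)).toReal), lt_of_lt_of_le zero_lt_one (le_max_left _ _),
    fun u hu hI => ?_⟩
  set I : ENNReal := ∫⁻ x, ENNReal.ofReal (|u x| ^ p) ∂μ with hIdef
  have hEmeas : ∀ t : ℝ, MeasurableSet {y | t < |u y|} :=
    fun t => measurableSet_lt measurable_const hu.abs
  have hweak : ∀ t : ℝ,
      μ {x | ∃ r, 0 < r ∧ ENNReal.ofReal γ * μ (ball x r) ≤ μ (ball x r ∩ {y | t < |u y|})} ≤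
        K * μ {y | t < |u y|} :=
    fun t => weak_covering_bound μ hpos c hc hdoubling γ hγ0 _ (hEmeas t)
  set A : ℚ → Set X := fun q => toMeasurable μ
    {x | ∃ r, 0 < r ∧ ENNReal.ofReal γ * μ (ball x r) ≤
      μ (ball x r ∩ {y | (q:ℝ) < |u y|})} with hAdef
  set B : ℚ → Set X := fun q => ⋂ (q' : ℚ) (_ : q' ≤ q), A q' with hBdef
  have hBmeas : ∀ q, MeasurableSet (B q) :=
    fun q => MeasurableSet.iInter fun q' => MeasurableSet.iInter fun _ =>
      measurableSet_toMeasurable μ _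
  have hBanti : ∀ {q' q : ℚ}, q' ≤ q → B q ⊆ B q' := by
    intro q' q h x hx
    exact Set.mem_iInter₂.2 fun s hs => Set.mem_iInter₂.1 hx s (hs.trans h)
  set g : X → ENNReal :=
    fun x => ⨆ q : ℚ, (B q).indicator (fun _ => ENNReal.ofReal (q:ℝ)) x with hgdef
  have hgmeas : Measurable g :=
    Measurable.iSup fun q => measurable_const.indicator (hBmeas q)
  -- pointwise majorization
  have hmaj : ∀ x, medianMaximal μ γ u x ≤ g x := by
    intro x
    refine le_of_forall_lt fun b hb => ?_
    unfold medianMaximal at hb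
    obtain ⟨r, hb⟩ := lt_iSup_iff.1 hb
    obtain ⟨hr, hb⟩ := lt_iSup_iff.1 hb
    have hbne : b ≠ ⊤ := hb.ne_top
    have hblt : b.toReal < median μ γ (ball x r) (fun y => |u y|) :=
      (ENNReal.lt_ofReal_iff_toReal_lt hbne).1 hb
    obtain ⟨q, hq1, hq2⟩ := exists_rat_btwn hblt
    have hxB : x ∈ B q := by
      refine Set.mem_iInter₂.2 fun q' hq' => subset_toMeasurable μ _ ?_
      have hmed : ENNReal.ofReal γ * μ (ball x r) ≤ μ {y ∈ ball x r | (q:ℝ) < |u y|} :=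
        median_gt_bound μ (ball x r) γ (by linarith) _ (fun y => abs_nonneg _) q hq2
      refine ⟨r, hr, hmed.trans (measure_mono ?_)⟩
      rintro y ⟨hy1, hy2⟩
      exact ⟨hy1, lt_of_le_of_lt (by exact_mod_cast hq') hy2⟩
    calc b < ENNReal.ofReal (q:ℝ) := (ENNReal.lt_ofReal_iff_toReal_lt hbne).2 hq1
      _ = (B q).indicator (fun _ => ENNReal.ofReal ((q:ℚ):ℝ)) x :=
          (Set.indicator_of_mem hxB (fun _ => ENNReal.ofReal ((q:ℚ):ℝ))).symm
      _ ≤ g x := le_iSup (fun q : ℚ => (B q).indicator (fun _ => ENNReal.ofReal (q:ℝ)) x) q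
  -- weak bound for g
  have hgweak : ∀ t : ℝ, 0 < t →
      μ {x | ENNReal.ofReal t < g x} ≤ K * μ {y | t < |u y|} := by
    intro t ht
    have hsub : {x | ENNReal.ofReal t < g x} ⊆ ⋃ q ∈ {q : ℚ | t < (q:ℝ)}, B q := by
      intro x hx
      simp only [Set.mem_setOf_eq] at hx
      obtain ⟨q, hq⟩ := lt_iSup_iff.1 hx
      have hxB : x ∈ B q := by
        by_contra hxB
        rw [Set.indicator_of_notMem hxB] at hq
        exact absurd hq (not_lt.2 zero_le)
      rw [Set.indicator_of_mem hxB] at hq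
      have htq : t < (q:ℝ) := (ENNReal.ofReal_lt_ofReal_iff_of_nonneg ht.le).1 hq
      exact Set.mem_biUnion htq hxB
    have hdir : DirectedOn (Function.onFun (· ⊆ ·) B) {q : ℚ | t < (q:ℝ)} := by
      intro q1 h1 q2 h2
      refine ⟨min q1 q2, ?_, hBanti (min_le_left _ _), hBanti (min_le_right _ _)⟩
      simp only [Set.mem_setOf_eq] at h1 h2 ⊢
      push_cast
      exact lt_min h1 h2
    calc μ {x | ENNReal.ofReal t < g x} ≤ μ (⋃ q ∈ {q : ℚ | t < (q:ℝ)}, B q) :=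
          measure_mono hsub
      _ = ⨆ q ∈ {q : ℚ | t < (q:ℝ)}, μ (B q) :=
          measure_biUnion_eq_iSup (Set.to_countable _) hdir
      _ ≤ K * μ {y | t < |u y|} := by
          refine iSup₂_le fun q hq => ?_
          calc μ (B q) ≤ μ (A q) := measure_mono (Set.biInter_subset_of_mem (le_refl q))
            _ = μ {x | ∃ r, 0 < r ∧ ENNReal.ofReal γ * μ (ball x r) ≤
                μ (ball x r ∩ {y | (q:ℝ) < |u y|})} := measure_toMeasurable _
            _ ≤ K * μ {y | (q:ℝ) < |u y|} := hweak _
            _ ≤ K * μ {y | t < |u y|} := by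
                refine mul_le_mul_right (measure_mono fun y hy => ?_) _
                simp only [Set.mem_setOf_eq] at hy ⊢
                exact lt_trans hq hy
  -- Chebyshev
  have hcheb : ∀ t : ℝ, 0 < t →
      μ {y | t < |u y|} ≤ I * (ENNReal.ofReal (t ^ p))⁻¹ := by
    intro t ht
    have habs : AEMeasurable (fun x => ENNReal.ofReal (|u x| ^ p)) μ :=
      ((hu.abs.pow measurable_const).ennreal_ofReal).aemeasurable
    have htp : (0:ℝ) < t ^ p := Real.rpow_pos_of_pos ht p
    have htpne : ENNReal.ofReal (t ^ p) ≠ 0 := by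
      simp [ENNReal.ofReal_eq_zero, not_le, htp]
    have hsub : {y | t < |u y|} ⊆
        {x | ENNReal.ofReal (t ^ p) ≤ ENNReal.ofReal (|u x| ^ p)} := fun x hx =>
      ENNReal.ofReal_le_ofReal (Real.rpow_le_rpow ht.le (le_of_lt hx) hp.le)
    have hcb := mul_meas_ge_le_lintegral₀ habs (ENNReal.ofReal (t ^ p))
    calc μ {y | t < |u y|}
        ≤ μ {x | ENNReal.ofReal (t ^ p) ≤ ENNReal.ofReal (|u x| ^ p)} := measure_mono hsub
      _ = (ENNReal.ofReal (t ^ p))⁻¹ *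
          (ENNReal.ofReal (t ^ p) * μ {x | ENNReal.ofReal (t ^ p) ≤ ENNReal.ofReal (|u x| ^ p)}) := by
          rw [← mul_assoc, ENNReal.inv_mul_cancel htpne ENNReal.ofReal_ne_top, one_mul]
      _ ≤ (ENNReal.ofReal (t ^ p))⁻¹ * I := mul_le_mul_right hcb _
      _ = I * (ENNReal.ofReal (t ^ p))⁻¹ := mul_comm _ _
  -- g is a.e. finite
  have hginfty : μ {x | g x = ⊤} = 0 := by
    have hKI : K * I ≠ ⊤ := ENNReal.mul_ne_top hKtop hI.ne
    have hb : ∀ n : ℕ, 1 ≤ n → μ {x | g x = ⊤} ≤ K * I * (ENNReal.ofReal ((n:ℝ) ^ p))⁻¹ := by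
      intro n hn
      have hn0 : (0:ℝ) < (n:ℝ) := by exact_mod_cast hn
      have h1 : {x | g x = ⊤} ⊆ {x | ENNReal.ofReal (n:ℝ) < g x} := by
        intro x hx
        simp only [Set.mem_setOf_eq] at hx ⊢
        rw [hx]
        exact ENNReal.ofReal_lt_top
      calc μ {x | g x = ⊤} ≤ μ {x | ENNReal.ofReal (n:ℝ) < g x} := measure_mono h1
        _ ≤ K * μ {y | (n:ℝ) < |u y|} := hgweak _ hn0
        _ ≤ K * (I * (ENNReal.ofReal ((n:ℝ) ^ p))⁻¹) := mul_le_mul_right (hcheb _ hn0) _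
        _ = K * I * (ENNReal.ofReal ((n:ℝ) ^ p))⁻¹ := (mul_assoc _ _ _).symm
    have htend : Filter.Tendsto (fun n : ℕ => K * I * (ENNReal.ofReal ((n:ℝ) ^ p))⁻¹)
        Filter.atTop (nhds 0) := by
      have h1 : Filter.Tendsto (fun n : ℕ => ENNReal.ofReal ((n:ℝ) ^ p)) Filter.atTop (nhds ⊤) :=
        ENNReal.tendsto_ofReal_atTop.comp
          ((tendsto_rpow_atTop hp).comp tendsto_natCast_atTop_atTop)
      have h2 : Filter.Tendsto (fun n : ℕ => (ENNReal.ofReal ((n:ℝ) ^ p))⁻¹)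
          Filter.atTop (nhds 0) := by
        simpa using ENNReal.tendsto_inv_iff.2 h1
      simpa using ENNReal.Tendsto.const_mul h2 (Or.inr hKI)
    exact le_antisymm
      (ge_of_tendsto htend (Filter.eventually_atTop.2 ⟨1, fun n hn => hb n hn⟩)) zero_le
  have hgfin_ae : ∀ᵐ x ∂μ, g x ≠ ⊤ := by
    rw [MeasureTheory.ae_iff]
    simpa using hginfty
  -- layer cake
  have hfmble : AEMeasurable (fun x => (g x).toReal) μ :=
    (ENNReal.measurable_toReal.comp hgmeas).aemeasurable
  have hfnn : 0 ≤ᵐ[μ] fun x => (g x).toReal :=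
    Filter.Eventually.of_forall fun x => ENNReal.toReal_nonneg
  have heq1 : ∫⁻ x, g x ^ p ∂μ = ∫⁻ x, ENNReal.ofReal ((g x).toReal ^ p) ∂μ := by
    refine lintegral_congr_ae ?_
    filter_upwards [hgfin_ae] with x hx
    conv_lhs => rw [← ENNReal.ofReal_toReal hx]
    rw [← ENNReal.ofReal_rpow_of_nonneg ENNReal.toReal_nonneg hp.le]
  have heq2 := MeasureTheory.lintegral_rpow_eq_lintegral_meas_lt_mul μ hfnn hfmble hp
  have heq3 := MeasureTheory.lintegral_rpow_eq_lintegral_meas_lt_mul μ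
    (f := fun x => |u x|) (Filter.Eventually.of_forall fun x => abs_nonneg _)
    hu.abs.aemeasurable hp
  have hmain : ∫⁻ x, medianMaximal μ γ u x ^ p ∂μ ≤ K * I := by
    calc ∫⁻ x, medianMaximal μ γ u x ^ p ∂μ
        ≤ ∫⁻ x, g x ^ p ∂μ := lintegral_mono fun x => ENNReal.rpow_le_rpow (hmaj x) hp.le
      _ = ∫⁻ x, ENNReal.ofReal ((g x).toReal ^ p) ∂μ := heq1
      _ = ENNReal.ofReal p *
          ∫⁻ t in Set.Ioi (0:ℝ), μ {a | t < (g a).toReal} * ENNReal.ofReal (t ^ (p-1)) := heq2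
      _ ≤ ENNReal.ofReal p *
          ∫⁻ t in Set.Ioi (0:ℝ), K * (μ {y | t < |u y|} * ENNReal.ofReal (t ^ (p-1))) := by
          refine mul_le_mul_right ?_ _
          refine lintegral_mono_ae ?_
          filter_upwards [self_mem_ae_restrict
            (measurableSet_Ioi : MeasurableSet (Set.Ioi (0:ℝ)))] with t ht
          rw [← mul_assoc]
          refine mul_le_mul_left ?_ _
          have hsub : {a | t < (g a).toReal} ⊆ {a | ENNReal.ofReal t < g a} := by
            intro a ha
            rcases eq_or_ne (g a) ⊤ with hga | hga
            · simp only [Set.mem_setOf_eq, hga]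
              exact ENNReal.ofReal_lt_top
            · exact (ENNReal.ofReal_lt_iff_lt_toReal (le_of_lt ht) hga).2 ha
          exact (measure_mono hsub).trans (hgweak t ht)
      _ = K * (ENNReal.ofReal p *
          ∫⁻ t in Set.Ioi (0:ℝ), μ {y | t < |u y|} * ENNReal.ofReal (t ^ (p-1))) := by
          rw [lintegral_const_mul' K _ hKtop]; ring
      _ = K * I := by
          congr 1
          rw [hIdef]
          simpa using heq3.symm
  have hfinal := ENNReal.rpow_le_rpow hmain (by positivity : (0:ℝ) ≤ 1/p)
  rw [ENNReal.mul_rpow_of_nonneg _ _ (by positivity : (0:ℝ) ≤ 1/p)] at hfinal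
  refine hfinal.trans (mul_le_mul_left ?_ _)
  have hKp : K ^ (1/p) ≠ ⊤ := ENNReal.rpow_ne_top_of_nonneg (by positivity) hKtop
  calc K ^ (1/p) = ENNReal.ofReal ((K ^ (1/p)).toReal) := (ENNReal.ofReal_toReal hKp).symm
    _ ≤ ENNReal.ofReal (max 1 ((K ^ (1/p)).toReal)) :=
        ENNReal.ofReal_le_ofReal (le_max_right _ _)
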